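/- Let H be a real Hilbert space and let T : H → H be a bounded linear operator that is self-adjoint, positive semidefinite, and non-expansive (‖T‖ ≤ 1), and such that 1 is not an eigenvalue of T. Then for every x ∈ H the sequence of iterates T^k x converges to 0 in norm as k → ∞. -/

import Mathlib

open Filter
open scoped RealInnerProductSpace

/-- Cauchy–Schwarz inequality for the positive bilinear form `⟪T u, v⟫`. -/
lemma aux_cs {H : Type*} [NormedAddCommGroup H] [InnerProductSpace ℝ H]
    (T : H →L[ℝ] H)
    (hsa : ∀ x y : H, ⟪T x, y⟫ = ⟪x, T y⟫)
    (hpos : ∀ x : H, 0 ≤ ⟪T x, x⟫) (u v : H) :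
    ⟪T u, v⟫ ^ 2 ≤ ⟪T u, u⟫ * ⟪T v, v⟫ := by
  have hsymm : ⟪T v, u⟫ = ⟪T u, v⟫ := by
    rw [hsa v u, real_inner_comm]
  have h : ∀ t : ℝ, 0 ≤ ⟪T v, v⟫ * (t * t) + (2 * ⟪T u, v⟫) * t + ⟪T u, u⟫ := by
    intro t
    have hp := hpos (u + t • v)
    have expand : ⟪T (u + t • v), u + t • v⟫
        = ⟪T v, v⟫ * (t * t) + (2 * ⟪T u, v⟫) * t + ⟪T u, u⟫ := by
      rw [map_add, map_smul]
      simp only [inner_add_left, inner_add_right, real_inner_smul_left,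
        real_inner_smul_right]
      rw [hsymm]; ring
    rw [expand] at hp
    exact hp
  have hd := discrim_le_zero h
  rw [discrim] at hd
  nlinarith [hd]

/-- Key inequality: for a positive self-adjoint contraction, `‖T y‖² ≤ ⟪T y, y⟫`. -/
lemma aux_key {H : Type*} [NormedAddCommGroup H] [InnerProductSpace ℝ H]
    (T : H →L[ℝ] H)
    (hsa : ∀ x y : H, ⟪T x, y⟫ = ⟪x, T y⟫)
    (hpos : ∀ x : H, 0 ≤ ⟪T x, x⟫)
    (hne : ‖T‖ ≤ 1) (y : H) :
    ‖T y‖ ^ 2 ≤ ⟪T y, y⟫ := by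
  by_cases h0 : T y = 0
  · rw [h0]; simp
  have hcs := aux_cs T hsa hpos y (T y)
  have h1 : ⟪T y, T y⟫ = ‖T y‖ ^ 2 := real_inner_self_eq_norm_sq (T y)
  have h2 : ⟪T (T y), T y⟫ ≤ ‖T y‖ ^ 2 := by
    calc ⟪T (T y), T y⟫ ≤ ‖T (T y)‖ * ‖T y‖ := real_inner_le_norm _ _
      _ ≤ (‖T‖ * ‖T y‖) * ‖T y‖ := by
          gcongr
          exact T.le_opNorm (T y)
      _ ≤ (1 * ‖T y‖) * ‖T y‖ := by gcongr
      _ = ‖T y‖ ^ 2 := by ring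
  have hn : 0 < ‖T y‖ := norm_pos_iff.mpr h0
  have hcs' : (‖T y‖ ^ 2) ^ 2 ≤ ⟪T y, y⟫ * ⟪T (T y), T y⟫ := by
    rw [← h1]; exact hcs
  have hpy : 0 ≤ ⟪T y, y⟫ := hpos y
  nlinarith [hcs', h2, hpy, sq_nonneg (‖T y‖)]

/-- Contraction property of powers. -/
lemma aux_pow_le {H : Type*} [NormedAddCommGroup H] [InnerProductSpace ℝ H]
    (T : H →L[ℝ] H) (hne : ‖T‖ ≤ 1) :
    ∀ (k : ℕ) (y : H), ‖(T ^ k) y‖ ≤ ‖y‖ := by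
  intro k
  induction k with
  | zero => intro y; simp
  | succ n ih =>
    intro y
    have : (T ^ (n + 1)) y = T ((T ^ n) y) := by
      rw [pow_succ']; rfl
    rw [this]
    calc ‖T ((T ^ n) y)‖ ≤ ‖T‖ * ‖(T ^ n) y‖ := T.le_opNorm _
      _ ≤ 1 * ‖y‖ := by
          apply mul_le_mul hne (ih y) (norm_nonneg _) zero_le_one
      _ = ‖y‖ := one_mul _

/-- Powers applied to a vector in the range of `1 - T` tend to zero. -/
lemma aux_diff {H : Type*} [NormedAddCommGroup H] [InnerProductSpace ℝ H]
    (T : H →L[ℝ] H)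
    (hsa : ∀ x y : H, ⟪T x, y⟫ = ⟪x, T y⟫)
    (hpos : ∀ x : H, 0 ≤ ⟪T x, x⟫)
    (hne : ‖T‖ ≤ 1) (x : H) :
    Tendsto (fun k : ℕ => (T ^ k) x - T ((T ^ k) x)) atTop (nhds 0) := by
  set y : ℕ → H := fun k => (T ^ k) x with hy
  set c : ℕ → ℝ := fun k => ‖y k‖ ^ 2 with hc
  set d : ℕ → ℝ := fun k => ⟪T (y k), y k⟫ with hd
  have hysucc : ∀ k, y (k + 1) = T (y k) := by
    intro k; simp only [hy]; rw [pow_succ']; rfl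
  have hc1 : ∀ k, c (k + 1) = ‖T (y k)‖ ^ 2 := by
    intro k; simp only [hc, hysucc k]
  have hkl : ∀ k, c (k + 1) ≤ d k := by
    intro k; rw [hc1 k]; exact aux_key T hsa hpos hne (y k)
  have hdc : ∀ k, d k ≤ c k := by
    intro k
    calc ⟪T (y k), y k⟫ ≤ ‖T (y k)‖ * ‖y k‖ := real_inner_le_norm _ _
      _ ≤ (1 * ‖y k‖) * ‖y k‖ := by
          gcongr
          calc ‖T (y k)‖ ≤ ‖T‖ * ‖y k‖ := T.le_opNorm _
            _ ≤ 1 * ‖y k‖ := by gcongr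
      _ = ‖y k‖ ^ 2 := by ring
  have hanti : Antitone c := by
    apply antitone_nat_of_succ_le
    intro k
    exact le_trans (hkl k) (hdc k)
  have hbdd : BddBelow (Set.range c) := by
    refine ⟨0, ?_⟩
    rintro _ ⟨k, rfl⟩
    positivity
  have hcL : Tendsto c atTop (nhds (⨅ k, c k)) := tendsto_atTop_ciInf hanti hbdd
  set L : ℝ := ⨅ k, c k with hL
  have hc' : Tendsto (fun k => c (k + 1)) atTop (nhds L) :=
    hcL.comp (tendsto_add_atTop_nat 1)
  have hdL : Tendsto d atTop (nhds L) :=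
    tendsto_of_tendsto_of_tendsto_of_le_of_le hc' hcL hkl hdc
  have hsq : ∀ k, ‖y k - T (y k)‖ ^ 2 = c k - 2 * d k + c (k + 1) := by
    intro k
    rw [norm_sub_sq_real, hc1 k]
    have : ⟪y k, T (y k)⟫ = d k := real_inner_comm _ _
    rw [this]
  have hsq0 : Tendsto (fun k => ‖y k - T (y k)‖ ^ 2) atTop (nhds 0) := by
    have h1 : Tendsto (fun k => c k - 2 * d k + c (k + 1)) atTop
        (nhds (L - 2 * L + L)) := by
      exact (hcL.sub (hdL.const_mul 2)).add hc'
    have h2 : L - 2 * L + L = 0 := by ring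
    rw [h2] at h1
    exact h1.congr (fun k => (hsq k).symm)
  rw [tendsto_zero_iff_norm_tendsto_zero]
  have hsqrt : Tendsto (fun k => Real.sqrt (‖y k - T (y k)‖ ^ 2)) atTop
      (nhds (Real.sqrt 0)) := (Real.continuous_sqrt.tendsto 0).comp hsq0
  simp only [Real.sqrt_zero] at hsqrt
  refine hsqrt.congr (fun k => ?_)
  rw [Real.sqrt_sq (norm_nonneg _)]

/-- Abstract convergence of the powers of the linear part of the alternating
iteration operator: a self-adjoint, positive semidefinite, non-expansive
bounded operator on a real Hilbert space without eigenvalue `1` has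
`T^k x → 0` for every `x`. -/
theorem stmt_0
    {H : Type*} [NormedAddCommGroup H] [InnerProductSpace ℝ H] [CompleteSpace H]
    (T : H →L[ℝ] H)
    (hsa : ∀ x y : H, ⟪T x, y⟫ = ⟪x, T y⟫)
    (hpos : ∀ x : H, 0 ≤ ⟪T x, x⟫)
    (hne : ‖T‖ ≤ 1)
    (hev : ∀ x : H, T x = x → x = 0) :
    ∀ x : H, Tendsto (fun k : ℕ => (T ^ k) x) atTop (nhds 0) := by
  -- The range of `1 - T`
  set S : Submodule ℝ H := LinearMap.range ((1 - T : H →L[ℝ] H) : H →ₗ[ℝ] H) with hS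
  -- Its orthogonal complement is trivial
  have hSbot : Sᗮ = ⊥ := by
    rw [Submodule.eq_bot_iff]
    intro w hw
    have h1 : ∀ u : H, ⟪u, w - T w⟫ = 0 := by
      intro u
      have hu : (1 - T) u ∈ S := ⟨u, rfl⟩
      have := (Submodule.mem_orthogonal S w).mp hw _ hu
      have hexp : ((1 - T) u : H) = u - T u := by
        simp [ContinuousLinearMap.sub_apply]
      rw [hexp] at this
      calc ⟪u, w - T w⟫ = ⟪u, w⟫ - ⟪u, T w⟫ := by rw [inner_sub_right]
        _ = ⟪u, w⟫ - ⟪T u, w⟫ := by rw [hsa]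
        _ = ⟪u - T u, w⟫ := by rw [inner_sub_left]
        _ = 0 := this
    have h2 : w - T w = 0 := by
      have := h1 (w - T w)
      rwa [real_inner_self_eq_norm_sq, pow_eq_zero_iff (two_ne_zero),
        norm_eq_zero] at this
    have h3 : T w = w := by
      have := sub_eq_zero.mp h2
      exact this.symm
    exact hev w h3
  -- Hence the range is dense
  have hclosure : S.topologicalClosure = ⊤ := by
    rw [← Submodule.orthogonal_orthogonal_eq_closure, hSbot,
      Submodule.bot_orthogonal_eq_top]
  have hdense : ∀ x : H, x ∈ closure (S : Set H) := by
    intro x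
    rw [← Submodule.topologicalClosure_coe, hclosure]
    trivial
  -- Main argument
  intro x
  rw [NormedAddCommGroup.tendsto_nhds_zero]
  intro ε hε
  obtain ⟨u, huS, hud⟩ := Metric.mem_closure_iff.mp (hdense x) (ε / 2) (by linarith)
  obtain ⟨v, rfl⟩ := huS
  -- `T^k ((1 - T) v) → 0`
  have hdiff : Tendsto (fun k : ℕ => (T ^ k) ((1 - T) v : H)) atTop (nhds 0) := by
    have := aux_diff T hsa hpos hne v
    refine this.congr (fun k => ?_)
    have hexp : ((1 - T) v : H) = v - T v := by
      simp [ContinuousLinearMap.sub_apply]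
    rw [hexp, map_sub]
    congr 1
    have : (T ^ k) (T v) = ((T ^ k) * T) v := rfl
    rw [this, ← pow_succ, pow_succ']
    rfl
  have hev2 := (NormedAddCommGroup.tendsto_nhds_zero.mp hdiff) (ε / 2) (by linarith)
  filter_upwards [hev2] with k hk
  have hsplit : (T ^ k) x = (T ^ k) (x - (1 - T) v) + (T ^ k) ((1 - T) v : H) := by
    rw [← map_add]; congr 1; abel
  calc ‖(T ^ k) x‖
      ≤ ‖(T ^ k) (x - (1 - T) v)‖ + ‖(T ^ k) ((1 - T) v : H)‖ := by
        rw [hsplit]; exact norm_add_le _ _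
    _ ≤ ‖x - (1 - T) v‖ + ‖(T ^ k) ((1 - T) v : H)‖ := by
        gcongr
        exact aux_pow_le T hne k _
    _ < ε / 2 + ε / 2 := by
        apply add_lt_add _ hk
        rwa [← dist_eq_norm]
    _ = ε := by ring
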